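/- If n = p₁^{α₁} ⋯ p_k^{α_k} with primes p₁ < p₂ < ⋯ < p_k, then ψ(C_n) ≥ (p₁/(p_k + 1)) · n². -/

import Mathlib

open Finset

/-- The order of `x` relative to the subgroup `H`: the least positive `m` with `x ^ m ∈ H`. -/
noncomputable def relOrder {G : Type*} [Group G] (H : Subgroup G) (x : G) : ℕ :=
  sInf {m : ℕ | 0 < m ∧ x ^ m ∈ H}

/-- `ψ_H(G)`, the sum of element orders of `G` relative to the subgroup `H`. -/
noncomputable def psiRel (G : Type*) [Group G] [Fintype G] (H : Subgroup G) : ℕ :=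
  ∑ x : G, relOrder H x

/-- `ψ(G)`, the sum of element orders of `G`. -/
noncomputable def psi (G : Type*) [Group G] [Fintype G] : ℕ :=
  ∑ x : G, orderOf x

noncomputable def myf : ArithmeticFunction ℕ := ⟨fun n => n * n.totient, by simp⟩

noncomputable def myG : ArithmeticFunction ℕ := myf * ArithmeticFunction.zeta

lemma myG_apply (x : ℕ) : myG x = ∑ d ∈ x.divisors, d * d.totient := by
  rw [myG, ArithmeticFunction.mul_zeta_apply]
  rfl

lemma myG_mult : myG.IsMultiplicative := by
  refine ArithmeticFunction.IsMultiplicative.mul ⟨by simp [myf], ?_⟩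
    ArithmeticFunction.isMultiplicative_zeta
  intro m n h
  show (m * n) * (m * n).totient = (m * m.totient) * (n * n.totient)
  rw [Nat.totient_mul h]; ring

lemma psi_eq (n : ℕ) [NeZero n] :
    psi (Multiplicative (ZMod n)) = ∑ d ∈ n.divisors, d * d.totient := by
  classical
  have hcard : Fintype.card (Multiplicative (ZMod n)) = n := by
    rw [Fintype.card_multiplicative, ZMod.card]
  have hmaps : ∀ x : Multiplicative (ZMod n), x ∈ Finset.univ → orderOf x ∈ n.divisors := by
    intro x _
    refine Nat.mem_divisors.mpr ⟨?_, NeZero.ne n⟩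
    have h := orderOf_dvd_card (x := x)
    rwa [hcard] at h
  rw [psi, ← Finset.sum_fiberwise_of_maps_to hmaps]
  refine Finset.sum_congr rfl fun d hd => ?_
  have hdvd : d ∣ Fintype.card (Multiplicative (ZMod n)) := by
    have h := (Nat.mem_divisors.mp hd).1
    rwa [← hcard] at h
  rw [Finset.sum_congr rfl (fun x hx => (Finset.mem_filter.mp hx).2),
    Finset.sum_const, smul_eq_mul, IsCyclic.card_orderOf_eq_totient hdvd, mul_comm]

lemma pp_sum (p : ℕ) (hp : p.Prime) (a : ℕ) :
    ((p : ℚ) + 1) * ∑ i ∈ Finset.range (a + 1), (p : ℚ) ^ i * ((p ^ i).totient : ℚ)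
      = (p : ℚ) ^ (2 * a + 1) + 1 := by
  induction a with
  | zero => simp [mul_comm]
  | succ a ih =>
    rw [Finset.sum_range_succ, mul_add, ih, Nat.totient_prime_pow hp (Nat.succ_pos a)]
    push_cast [Nat.cast_sub hp.one_lt.le]
    ring

lemma pp_bound (p a : ℕ) (hp : p.Prime) :
    (p : ℚ) / (p + 1) * ((p ^ a : ℕ) : ℚ) ^ 2 ≤ (myG (p ^ a) : ℚ) := by
  have hS : (myG (p ^ a) : ℚ)
      = ∑ i ∈ Finset.range (a + 1), (p : ℚ) ^ i * ((p ^ i).totient : ℚ) := by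
    rw [myG_apply, Nat.sum_divisors_prime_pow hp]
    push_cast
    rfl
  have hid := pp_sum p hp a
  have hp1 : (0 : ℚ) < (p : ℚ) + 1 := by positivity
  rw [hS, div_mul_eq_mul_div, div_le_iff₀ hp1]
  have hc : (p : ℚ) * ((p ^ a : ℕ) : ℚ) ^ 2 = (p : ℚ) ^ (2 * a + 1) := by
    push_cast; ring
  rw [hc, mul_comm _ ((p : ℚ) + 1)] at *
  linarith [hid]

lemma prod_bound (S : Finset ℕ) :
    ∀ m M : ℕ, m ∈ S → M ∈ S → (∀ p ∈ S, m ≤ p) → (∀ p ∈ S, p ≤ M) →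
      (m : ℚ) / (M + 1) ≤ ∏ p ∈ S, (p : ℚ) / (p + 1) := by
  induction S using Finset.induction_on_max with
  | empty => intro m M hm _ _ _; exact absurd hm (Finset.notMem_empty m)
  | insert a T hlt ih =>
    intro m M hm hM hmin hmax
    have haM : M = a := by
      have h1 : a ≤ M := hmax a (mem_insert_self a T)
      rcases mem_insert.mp hM with rfl | hMT
      · rfl
      · exact absurd h1 (not_le.mpr (hlt M hMT))
    have key : ∏ p ∈ insert a T, (p : ℚ) / (p + 1)
        = (a : ℚ) / (a + 1) * ∏ p ∈ T, (p : ℚ) / (p + 1) :=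
      Finset.prod_insert (fun h => absurd (hlt a h) (lt_irrefl a))
    rw [key, haM]
    rcases T.eq_empty_or_nonempty with rfl | hT
    · have hma : m = a := by
        rcases mem_insert.mp hm with rfl | h
        · rfl
        · exact absurd h (Finset.notMem_empty m)
      rw [hma, prod_empty, mul_one]
    · have hmT : m ∈ T := by
        rcases mem_insert.mp hm with rfl | h
        · obtain ⟨x, hx⟩ := hT
          exact absurd (hmin x (mem_insert_of_mem hx)) (not_le.mpr (hlt x hx))
        · exact h
      have hM' : T.max' hT ∈ T := T.max'_mem hT
      have ihT := ih m (T.max' hT) hmT hM' (fun p hp => hmin p (mem_insert_of_mem hp))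
        (fun p hp => T.le_max' p hp)
      have hM'a : (T.max' hT : ℚ) + 1 ≤ (a : ℚ) := by
        exact_mod_cast hlt _ hM'
      have h1 : (m : ℚ) / (a + 1) ≤ (a : ℚ) / (a + 1) * ((m : ℚ) / (T.max' hT + 1)) := by
        rw [div_mul_div_comm, div_le_div_iff₀ (by positivity) (by positivity)]
        have hm0 : (0 : ℚ) ≤ (m : ℚ) := Nat.cast_nonneg m
        nlinarith [mul_le_mul_of_nonneg_left hM'a (mul_nonneg hm0 (by positivity : (0:ℚ) ≤ (a:ℚ)+1))]
      calc (m : ℚ) / (a + 1) ≤ (a : ℚ) / (a + 1) * ((m : ℚ) / (T.max' hT + 1)) := h1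
        _ ≤ (a : ℚ) / (a + 1) * ∏ p ∈ T, (p : ℚ) / (p + 1) :=
            mul_le_mul_of_nonneg_left ihT (by positivity)
theorem psi_cyclic_ge (n p₁ pk : ℕ) [NeZero n] (hn : 1 < n)
    (hp₁ : p₁ = n.minFac)
    (hpk : pk.Prime) (hpkdvd : pk ∣ n) (hpkmax : ∀ p : ℕ, p.Prime → p ∣ n → p ≤ pk) :
    ((p₁ : ℚ) / (pk + 1)) * (n : ℚ) ^ 2 ≤ (psi (Multiplicative (ZMod n)) : ℚ) := by
  have hn0 : n ≠ 0 := NeZero.ne n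
  have hpsi : (psi (Multiplicative (ZMod n)) : ℚ) = (myG n : ℚ) := by
    rw [psi_eq, myG_apply]
  have hfac := myG_mult.multiplicative_factorization myG hn0
  rw [hpsi, hfac, Finsupp.prod, Nat.cast_prod, Nat.support_factorization]
  have step1 : ∏ p ∈ n.primeFactors, ((p : ℚ) / (p + 1) * ((p ^ n.factorization p : ℕ) : ℚ) ^ 2)
      ≤ ∏ p ∈ n.primeFactors, (myG (p ^ n.factorization p) : ℚ) := by
    apply Finset.prod_le_prod
    · intro p _; positivity
    · intro p hp; exact pp_bound p _ (Nat.prime_of_mem_primeFactors hp)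
  refine le_trans ?_ step1
  have hn2 : ∏ p ∈ n.primeFactors, ((p ^ n.factorization p : ℕ) : ℚ) = (n : ℚ) := by
    have h := Nat.factorization_prod_pow_eq_self hn0
    rw [Finsupp.prod, Nat.support_factorization] at h
    rw [← Nat.cast_prod, h]
  rw [Finset.prod_mul_distrib, Finset.prod_pow, hn2]
  have hmem₁ : p₁ ∈ n.primeFactors := by
    rw [hp₁]
    exact Nat.mem_primeFactors.mpr ⟨Nat.minFac_prime hn.ne', Nat.minFac_dvd n, hn0⟩
  have hmemk : pk ∈ n.primeFactors := Nat.mem_primeFactors.mpr ⟨hpk, hpkdvd, hn0⟩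
  have hb := prod_bound n.primeFactors p₁ pk hmem₁ hmemk
    (fun p hp => by
      rw [hp₁]
      exact Nat.minFac_le_of_dvd (Nat.prime_of_mem_primeFactors hp).two_le
        (Nat.dvd_of_mem_primeFactors hp))
    (fun p hp => hpkmax p (Nat.prime_of_mem_primeFactors hp) (Nat.dvd_of_mem_primeFactors hp))
  exact mul_le_mul_of_nonneg_right hb (sq_nonneg _)
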